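/- For all a, b ∈ V, all γ ∈ F with γ ≠ 0, and all u ∈ V: ϑ_a(u + γ²·⟨u, a+b⟩·(a+b)) = ϑ_b(u) + (1 + γ² + γ⁴·ϑ_a(a+b))·⟨a+b, u⟩². (This is the formula for the action of the symplectic transvection T_{γ(a+b)} on the quadratic form ϑ_a.) -/

import Mathlib

open Finset

noncomputable section

/-- The symplectic bilinear form `⟨u,v⟩ = ∑_{i<m} (u_i v_{m+i} + u_{m+i} v_i)` on `F^{2m}`,
`F = GF(2^h)`. -/
def symp (h m : ℕ) (u v : Fin (2*m) → GaloisField 2 h) : GaloisField 2 h :=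
  ∑ i : Fin m, (u ⟨i.1, by omega⟩ * v ⟨m + i.1, by omega⟩ +
    u ⟨m + i.1, by omega⟩ * v ⟨i.1, by omega⟩)

/-- The quadratic form `ϑ_0(u) = ∑_{i<m} u_i u_{m+i}`. -/
def th0 (h m : ℕ) (u : Fin (2*m) → GaloisField 2 h) : GaloisField 2 h :=
  ∑ i : Fin m, u ⟨i.1, by omega⟩ * u ⟨m + i.1, by omega⟩

/-- The quadratic form `ϑ_a(u) = ϑ_0(u) + ⟨a,u⟩²`. -/
def th (h m : ℕ) (a u : Fin (2*m) → GaloisField 2 h) : GaloisField 2 h :=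
  th0 h m u + (symp h m a u)^2

/-- The absolute trace `GF(2^h) → F_2`. -/
def tr (h : ℕ) (x : GaloisField 2 h) : ZMod 2 :=
  Algebra.trace (ZMod 2) (GaloisField 2 h) x

end


section AuxLemmas
variable (h m : ℕ)

lemma symp_comm (u v : Fin (2*m) → GaloisField 2 h) : symp h m u v = symp h m v u := by
  unfold symp; apply Finset.sum_congr rfl; intros; ring

lemma symp_add_right (a u v : Fin (2*m) → GaloisField 2 h) :
    symp h m a (u + v) = symp h m a u + symp h m a v := by
  unfold symp
  rw [← Finset.sum_add_distrib]
  apply Finset.sum_congr rfl; intros; simp only [Pi.add_apply]; ring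

lemma symp_add_left (a b u : Fin (2*m) → GaloisField 2 h) :
    symp h m (a + b) u = symp h m a u + symp h m b u := by
  rw [symp_comm, symp_add_right, symp_comm h m u a, symp_comm h m u b]

lemma symp_smul_right (t : GaloisField 2 h) (a v : Fin (2*m) → GaloisField 2 h) :
    symp h m a (t • v) = t * symp h m a v := by
  unfold symp
  rw [Finset.mul_sum]
  apply Finset.sum_congr rfl; intros
  simp only [Pi.smul_apply, smul_eq_mul]; ring

lemma th0_addsmul (t : GaloisField 2 h) (u c : Fin (2*m) → GaloisField 2 h) :
    th0 h m (u + t • c) = th0 h m u + t^2 * th0 h m c + t * symp h m u c := by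
  unfold th0 symp
  rw [Finset.mul_sum, Finset.mul_sum, ← Finset.sum_add_distrib, ← Finset.sum_add_distrib]
  apply Finset.sum_congr rfl; intros
  simp only [Pi.add_apply, Pi.smul_apply, smul_eq_mul]; ring

lemma two_eq_zero : (2 : GaloisField 2 h) = 0 := by
  have : CharP (GaloisField 2 h) 2 := inferInstance
  exact_mod_cast CharP.cast_eq_zero (GaloisField 2 h) 2

end AuxLemmas

/-- Action of the symplectic transvection `T_{γ(a+b)}` on the quadratic form `ϑ_a`:
`ϑ_a(T_{γ(a+b)} u) = ϑ_b(u) + (1 + γ² + γ⁴ ϑ_a(a+b))·⟨a+b,u⟩²`. -/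

theorem stmt_18 (h m : ℕ) (hh : 1 ≤ h) (hm : 1 ≤ m)
    (a b : Fin (2*m) → GaloisField 2 h) (γ : GaloisField 2 h) (hγ : γ ≠ 0)
    (u : Fin (2*m) → GaloisField 2 h) :
    th h m a (u + (γ^2 * symp h m u (a + b)) • (a + b))
      = th h m b u + (1 + γ^2 + γ^4 * th h m a (a + b)) * (symp h m (a + b) u)^2 := by

  have h2 : (2 : GaloisField 2 h) = 0 := two_eq_zero h
  set c := a + b with hc
  set A := symp h m a u with hA
  set C := symp h m c u with hC
  set S := symp h m a c with hS
  have hB : symp h m b u = C - A := by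
    rw [hC, hc, symp_add_left]; ring
  have huc : symp h m u c = C := by rw [symp_comm]
  unfold th
  rw [huc, th0_addsmul, huc, symp_add_right, symp_smul_right, hB, ← hA, ← hS]
  linear_combination (γ^2*C*A*S + C*A - C^2) * h2
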